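/- Let p_i ∈ (1/2, 1), ε_i = p_i - 1/2, and ε'_i ∈ (1/2 - γ', 1/2] for all i, where the committee is absolutely balanced with parameter γ ∈ (0,1/2) (so ε_i < 1/2 - γ) and ε'_i ≥ a - 1/2 > 0 for a common a ∈ (1/2, 1]. Define Φ = Σ_i ε_i log((1+2ε_i)/(1-2ε_i)) and Φ̃ = Σ_i ε_i log((1+4ε_iε'_i)/(1-4ε_iε'_i)). Then Φ̃/Φ ≥ 1 - C(1/2 - γ) · (1-a)/(a - 1/2), where C(x) = 4x / ((1-4x²)·log((1+2x)/(1-2x))). -/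

import Mathlib

open Real Set

noncomputable def fl (t : ℝ) : ℝ := Real.log (1+2*t) - Real.log (1-2*t)

lemma fl_hasDeriv {t : ℝ} (h1 : -(1/2) < t) (h2 : t < 1/2) :
    HasDerivAt fl (4/(1-4*t^2)) t := by
  have hp1 : (0:ℝ) < 1 + 2*t := by linarith
  have hp2 : (0:ℝ) < 1 - 2*t := by linarith
  have d1 : HasDerivAt (fun s : ℝ => 1+2*s) 2 t := by
    simpa using ((hasDerivAt_id t).const_mul (2:ℝ)).const_add (1:ℝ)
  have hp3 : (0:ℝ) < 1-4*t^2 := by nlinarith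
  have d2 : HasDerivAt (fun s : ℝ => 1-2*s) (-2) t := by
    have h := d1.neg.const_add (2:ℝ)
    have hfun : (fun s:ℝ => 1-2*s) = fun s => 2 + -(1+2*s) := by funext s; ring
    rw [hfun]; simpa using h
  have l1 := d1.log hp1.ne'
  have l2 := d2.log hp2.ne'
  have := l1.sub l2
  refine this.congr_deriv ?_
  rw [div_sub_div _ _ hp1.ne' hp2.ne', div_eq_div_iff (by positivity) hp3.ne']
  ring

lemma fl_eq {t : ℝ} (h1 : -(1/2) < t) (h2 : t < 1/2) :
    fl t = Real.log ((1+2*t)/(1-2*t)) := by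
  rw [fl, Real.log_div (by linarith) (by linarith)]

lemma fl_pos {t : ℝ} (h1 : 0 < t) (h2 : t < 1/2) : 0 < fl t := by
  have : Real.log (1-2*t) < 0 := Real.log_neg (by linarith) (by linarith)
  have : 0 < Real.log (1+2*t) := Real.log_pos (by linarith)
  unfold fl; linarith

lemma fl_contOn {u v : ℝ} (hu : -(1/2) < u) (hv : v < 1/2) :
    ContinuousOn fl (Icc u v) := fun t ht =>
  ((fl_hasDeriv (lt_of_lt_of_le hu ht.1) (lt_of_le_of_lt ht.2 hv)).continuousAt).continuousWithinAt

lemma fl_ge {t : ℝ} (h0 : 0 ≤ t) (h2 : t < 1/2) : 4*t ≤ fl t := by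
  rcases eq_or_lt_of_le h0 with h|h
  · simp [← h, fl]
  · obtain ⟨c, hc, hceq⟩ := exists_hasDerivAt_eq_slope fl (fun s => 4/(1-4*s^2)) h
      (fl_contOn (by linarith) h2)
      (fun s hs => fl_hasDeriv (by linarith [hs.1]) (by linarith [hs.2, h2]))
    have hc2 : c < 1/2 := lt_trans hc.2 h2
    have hden : 0 < 1-4*c^2 := by nlinarith [hc.1]
    rw [eq_div_iff (by linarith : t - (0:ℝ) ≠ 0)] at hceq
    have hfl0 : fl 0 = 0 := by simp [fl]
    rw [hfl0] at hceq
    have h4 : 4 ≤ 4/(1-4*c^2) := by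
      rw [le_div_iff₀ hden]; nlinarith [hc.1]
    nlinarith [hceq, h4, h]

lemma fl_sub_le {u v : ℝ} (hu : 0 < u) (huv : u ≤ v) (hv : v < 1/2) :
    fl v - fl u ≤ 4/(1-4*v^2)*(v-u) := by
  rcases eq_or_lt_of_le huv with h|h
  · rw [h]; simp
  · obtain ⟨c, hc, hceq⟩ := exists_hasDerivAt_eq_slope fl (fun s => 4/(1-4*s^2)) h
      (fl_contOn (by linarith) hv)
      (fun s hs => fl_hasDeriv (by linarith [hs.1]) (by linarith [hs.2]))
    rw [eq_div_iff (by linarith : v - u ≠ 0)] at hceq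
    have hc2 : c < 1/2 := lt_trans hc.2 hv
    have hdc : 0 < 1-4*c^2 := by nlinarith [hc.1, hu]
    have hdv : 0 < 1-4*v^2 := by nlinarith
    have hm : 4/(1-4*c^2) ≤ 4/(1-4*v^2) := by
      apply div_le_div_of_nonneg_left (by norm_num) hdv
      nlinarith [hc.2, hc.1, hu]
    nlinarith [hceq, hm, h]

lemma key_mono {x b : ℝ} (hx : 0 < x) (hxb : x ≤ b) (hb : b < 1/2) :
    x*((1-4*b^2)*fl b) ≤ b*((1-4*x^2)*fl x) := by
  rcases eq_or_lt_of_le hxb with h|h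
  · rw [h]
  · have hder : ∀ t, 0 < t → t < 1/2 →
        HasDerivAt (fun s => (1-4*s^2)*fl s/s)
          (((-(8*t)*fl t + (1-4*t^2)*(4/(1-4*t^2)))*t - (1-4*t^2)*fl t*1)/t^2) t := by
      intro t ht0 ht2
      have dq : HasDerivAt (fun s:ℝ => 1-4*s^2) (-(8*t)) t := by
        have := ((hasDerivAt_pow 2 t).const_mul (4:ℝ)).const_sub (1:ℝ)
        exact this.congr_deriv (by norm_num; ring)
      have dD := dq.mul (fl_hasDeriv (by linarith) ht2)
      have := dD.div (hasDerivAt_id t) (ne_of_gt ht0)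
      exact this
    obtain ⟨c, hc, hceq⟩ := exists_hasDerivAt_eq_slope (fun s => (1-4*s^2)*fl s/s)
      (fun t => ((-(8*t)*fl t + (1-4*t^2)*(4/(1-4*t^2)))*t - (1-4*t^2)*fl t*1)/t^2) h
      (fun t ht => ((hder t (lt_of_lt_of_le hx ht.1) (lt_of_le_of_lt ht.2 hb)).continuousAt).continuousWithinAt)
      (fun t ht => hder t (lt_trans hx ht.1) (lt_trans ht.2 hb))
    have hc0 : 0 < c := lt_trans hx hc.1
    have hc2 : c < 1/2 := lt_trans hc.2 hb
    have hdc : 0 < 1-4*c^2 := by nlinarith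
    have hflc := fl_ge hc0.le hc2
    have hflcnn : 0 ≤ fl c := by nlinarith
    have hcancel : (1-4*c^2)*(4/(1-4*c^2)) = 4 := by
      field_simp
    have hnum : ((-(8*c)*fl c + (1-4*c^2)*(4/(1-4*c^2)))*c - (1-4*c^2)*fl c*1) ≤ 0 := by
      rw [hcancel]; nlinarith
    have hphi' : ((-(8*c)*fl c + (1-4*c^2)*(4/(1-4*c^2)))*c - (1-4*c^2)*fl c*1)/c^2 ≤ 0 :=
      div_nonpos_of_nonpos_of_nonneg hnum (sq_nonneg c)
    rw [hceq] at hphi'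
    have hphile : (1-4*b^2)*fl b/b ≤ (1-4*x^2)*fl x/x := by
      have hbx : 0 < b - x := by linarith
      have := div_nonpos_iff.mp hphi'
      rcases this with ⟨h1,h2⟩|⟨h1,h2⟩
      · linarith
      · linarith
    have hbpos : 0 < b := lt_trans hx h
    rw [div_le_div_iff₀ hbpos hx] at hphile
    nlinarith [hphile]


set_option maxHeartbeats 1000000 in

/-- The pseudo committee potential is within factor
`1 - C(1/2-γ)·(1-a)/(a-1/2)` of the true committee potential. -/
theorem stmt_13 (N : ℕ) (hN : 0 < N) (γ a : ℝ) (ε ε' : Fin N → ℝ)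
    (hγ : γ ∈ Set.Ioo (0:ℝ) (1/2)) (ha : a ∈ Set.Ioc (1/2 : ℝ) 1)
    (hε : ∀ i, ε i ∈ Set.Ioo (0:ℝ) (1/2 - γ))
    (hε' : ∀ i, ε' i ∈ Set.Ioc (0:ℝ) (1/2))
    (hεa : ∀ i, a - 1/2 ≤ ε' i) :
    (∑ i, ε i * Real.log ((1 + 4 * ε i * ε' i) / (1 - 4 * ε i * ε' i))) /
        (∑ i, ε i * Real.log ((1 + 2 * ε i) / (1 - 2 * ε i))) ≥
      1 - (4 * (1/2 - γ) / ((1 - 4 * (1/2 - γ)^2) *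
            Real.log ((1 + 2 * (1/2 - γ)) / (1 - 2 * (1/2 - γ))))) *
          ((1 - a) / (a - 1/2)) := by
  obtain ⟨hγ0, hγ2⟩ := hγ
  obtain ⟨ha1, ha2⟩ := ha
  obtain ⟨b, hbdef⟩ : ∃ b : ℝ, b = 1/2 - γ := ⟨_, rfl⟩
  rw [← hbdef] at hε ⊢
  have hb0 : 0 < b := by rw [hbdef]; linarith
  have hb2 : b < 1/2 := by rw [hbdef]; linarith
  have hflb : 0 < fl b := fl_pos hb0 hb2
  have hQ : 0 < (1-4*b^2)*fl b := by
    have : 0 < 1-4*b^2 := by nlinarith [mul_pos (by linarith : (0:ℝ) < 1/2 - b) (by linarith : (0:ℝ) < 1/2 + b)]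
    positivity
  have hR : 0 < a - 1/2 := by linarith
  -- rewrite logs as fl
  rw [← fl_eq (by linarith : -(1/2:ℝ) < b) hb2]
  have hsum1 : (∑ i, ε i * Real.log ((1 + 2 * ε i)/(1 - 2 * ε i)))
      = ∑ i, ε i * fl (ε i) := by
    apply Finset.sum_congr rfl
    intro i _
    rw [← fl_eq (by linarith [(hε i).1] : -(1/2:ℝ) < ε i)
      (by have := (hε i).2; rw [hbdef] at *; linarith)]
  have hsum2 : (∑ i, ε i * Real.log ((1 + 4 * ε i * ε' i)/(1 - 4 * ε i * ε' i)))
      = ∑ i, ε i * fl (2 * ε i * ε' i) := by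
    apply Finset.sum_congr rfl
    intro i _
    have hx0 := (hε i).1
    have hy0 := (hε' i).1
    have hu0 : (0:ℝ) < 2 * ε i * ε' i := by positivity
    have hu2 : 2 * ε i * ε' i < 1/2 := by
      have h1 := (hε' i).2
      have h2 : ε i < 1/2 := by have := (hε i).2; rw [hbdef] at *; linarith
      nlinarith
    have harg1 : 1 + 4 * ε i * ε' i = 1 + 2 * (2 * ε i * ε' i) := by ring
    have harg2 : 1 - 4 * ε i * ε' i = 1 - 2 * (2 * ε i * ε' i) := by ring
    rw [harg1, harg2, ← fl_eq (by linarith : -(1/2:ℝ) < 2 * ε i * ε' i) hu2]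
  rw [hsum1, hsum2]
  -- positivity of denominator
  have : Nonempty (Fin N) := ⟨⟨0, hN⟩⟩
  have hΦ : 0 < ∑ i, ε i * fl (ε i) := by
    apply Finset.sum_pos
    · intro i _
      have hx0 := (hε i).1
      have hx2 : ε i < 1/2 := by have := (hε i).2; rw [hbdef] at *; linarith
      exact mul_pos hx0 (fl_pos hx0 hx2)
    · exact Finset.univ_nonempty
  rw [ge_iff_le, le_div_iff₀ hΦ]
  -- per-term bound
  have hterm : ∀ i : Fin N, ε i * fl (ε i) - ε i * fl (2 * ε i * ε' i) ≤
      (4 * b / ((1-4*b^2) * fl b) * ((1-a)/(a-1/2))) * (ε i * fl (ε i)) := by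
    intro i
    have hx0 := (hε i).1
    have hxb : ε i < b := (hε i).2
    have hx2 : ε i < 1/2 := lt_trans hxb hb2
    have hy0 := (hε' i).1
    have hy2 := (hε' i).2
    have hya := hεa i
    have hP : 0 < 1 - 4 * (ε i)^2 := by nlinarith
    have hflx : 0 < fl (ε i) := fl_pos hx0 hx2
    have hu0 : (0:ℝ) < 2 * ε i * ε' i := by positivity
    have huv : 2 * ε i * ε' i ≤ ε i := by nlinarith
    have E1 := fl_sub_le hu0 huv hx2
    have M := key_mono hx0 hxb.le hb2
    have hxy : ε i - 2 * ε i * ε' i ≤ 2 * ε i * (1-a) := by nlinarith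
    have key : 4*(ε i - 2 * ε i * ε' i)*(((1-4*b^2)*fl b)*(a-1/2)) ≤
        (4*b*((1-a)*fl (ε i)))*(1-4*(ε i)^2) := by
      calc 4*(ε i - 2 * ε i * ε' i)*(((1-4*b^2)*fl b)*(a-1/2))
          ≤ 4*(2*(ε i)*(1-a))*(((1-4*b^2)*fl b)*(a-1/2)) := by
            apply mul_le_mul_of_nonneg_right _ (mul_pos hQ hR).le
            linarith
        _ = (8*((ε i)*(1-a)*((1-4*b^2)*fl b)))*(a-1/2) := by ring
        _ ≤ (8*((ε i)*(1-a)*((1-4*b^2)*fl b)))*(1/2) := by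
            apply mul_le_mul_of_nonneg_left (by linarith)
            have : (0:ℝ) ≤ 1-a := by linarith
            positivity
        _ = (4*(1-a))*(ε i*((1-4*b^2)*fl b)) := by ring
        _ ≤ (4*(1-a))*(b*((1-4*(ε i)^2)*fl (ε i))) := by
            apply mul_le_mul_of_nonneg_left M (by linarith)
        _ = (4*b*((1-a)*fl (ε i)))*(1-4*(ε i)^2) := by ring
    have h4 : 4/(1-4*(ε i)^2)*(ε i - 2 * ε i * ε' i) ≤
        4 * b / ((1-4*b^2) * fl b) * ((1-a)/(a-1/2)) * fl (ε i) := by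
      rw [div_mul_eq_mul_div, div_le_iff₀ hP]
      have heq : 4 * b / ((1-4*b^2) * fl b) * ((1-a)/(a-1/2)) * fl (ε i) * (1-4*(ε i)^2)
          = (4*b*((1-a)*fl (ε i)))*(1-4*(ε i)^2) / (((1-4*b^2)*fl b)*(a-1/2)) := by
        field_simp
      rw [heq, le_div_iff₀ (mul_pos hQ hR)]
      linarith [key]
    nlinarith [E1, h4, hx0]
  have hsumle : (∑ i, ε i * fl (ε i)) - (∑ i, ε i * fl (2 * ε i * ε' i)) ≤
      (4 * b / ((1-4*b^2) * fl b) * ((1-a)/(a-1/2))) * ∑ i, ε i * fl (ε i) := by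
    rw [← Finset.sum_sub_distrib, Finset.mul_sum]
    exact Finset.sum_le_sum (fun i _ => hterm i)
  nlinarith [hsumle, hΦ]
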